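/- Pathing through strong field assignment: assume ρ,h,A ⊨ (Γ,Δ,Θ), ρ(x) = l_x ∈ A, Γ(x) = n_x ∈ Θ, ρ(y) = l_y, Γ(y) = t_y. If for some path π, value v, and basetype t we have ⟨ρ, h[(l_x,f) ↦ l_y]⟩π ⇓ v and [Γ, Δ[(n_x,f) ↦ t_y]]π ⇓ t, then at least one of the following holds: (1) ⟨ρ,h⟩π ⇓ v and [Γ,Δ]π ⇓ t; (2) there exists a path suffix π' with ⟨ρ,h⟩y.π' ⇓ v and [Γ,Δ]y.π' ⇓ t; (3) t = ⊤; (4) v = null. -/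

import Mathlib

namespace SecureClones

abbrev Var := ℕ
abbrev Field := ℕ
abbrev Loc := ℕ
abbrev PolId := ℕ
abbrev Node := ℕ

/-- Values: locations or null. -/
inductive Val where
  | loc : Loc → Val
  | null : Val
deriving DecidableEq

abbrev Obj := Field → Val
abbrev Heap := Loc → Option Obj
abbrev Env := Var → Val

/-- An access path: a root variable followed by a sequence of fields. -/
structure Path where
  root : Var
  fields : List Field
deriving DecidableEq

/-- Evaluation of a sequence of field dereferences from a value. -/
def evalFields (h : Heap) : Val → List Field → Option Val
  | v, [] => some v
  | Val.loc l, f :: fs =>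
      match h l with
      | some o => evalFields h (o f) fs
      | none => none
  | Val.null, _ :: _ => none

/-- Concrete path evaluation ⟨ρ,h⟩π ⇓ v. -/
def EvalPath (ρ : Env) (h : Heap) (π : Path) (v : Val) : Prop :=
  evalFields h (ρ π.root) π.fields = some v

/-- Reachability in a heap: `Reach h v w` iff `w` is reachable from `v`
by a (possibly empty) sequence of field dereferences. -/
inductive Reach (h : Heap) : Val → Val → Prop
  | refl (v) : Reach h v v
  | step {v : Val} {l : Loc} {o : Obj} (f : Field) :
      Reach h v (Val.loc l) → h l = some o → Reach h v (o f)

/-- A copy policy: a set of (policy identifier, deep field) pairs. -/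
abbrev Pol := Set (PolId × Field)

/-- A field sequence follows only deep fields of a policy (w.r.t. policy map `Pm`). -/
inductive FieldsSat (Pm : PolId → Pol) : Pol → List Field → Prop
  | nil (τ) : FieldsSat Pm τ []
  | cons {τ : Pol} {fs : List Field} (X : PolId) (f : Field) :
      (X, f) ∈ τ → FieldsSat Pm (Pm X) fs → FieldsSat Pm τ (f :: fs)

/-- ⊢ π : τ : the access path follows only deep fields of τ. -/
def PathSat (Pm : PolId → Pol) (π : Path) (τ : Pol) : Prop :=
  FieldsSat Pm τ π.fields

/-- Policy semantics ρ,h,x ⊨ τ. -/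
def PolSem (Pm : PolId → Pol) (ρ : Env) (h : Heap) (x : Var) (τ : Pol) : Prop :=
  ∀ (π π' : Path) (l l' : Loc),
    π.root = x → π'.root ≠ x →
    PathSat Pm π τ →
    EvalPath ρ h π (Val.loc l) → EvalPath ρ h π' (Val.loc l') →
    l ≠ l'

/-- Base types of the type-and-effect system. -/
inductive BaseType where
  | node : Node → BaseType
  | bot
  | topOut
  | top
deriving DecidableEq

abbrev Graph := Node → Option (Field → BaseType)

/-- A type (Γ,Δ,Θ). -/
structure Ty where
  Γ : Var → BaseType
  Δ : Graph
  Θ : Set Node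

/-- Abstract evaluation of a field sequence from a base type, with ⊤, ⊤out as sinks. -/
def aevalFields (Δ : Graph) : BaseType → List Field → Option BaseType
  | t, [] => some t
  | BaseType.node n, f :: fs =>
      match Δ n with
      | some e => aevalFields Δ (e f) fs
      | none => none
  | BaseType.top, _ :: _ => some BaseType.top
  | BaseType.topOut, _ :: _ => some BaseType.topOut
  | BaseType.bot, _ :: _ => none

/-- Abstract path evaluation [Γ,Δ]π ⇓ t. -/
def AEval (Γ : Var → BaseType) (Δ : Graph) (π : Path) (t : BaseType) : Prop :=
  aevalFields Δ (Γ π.root) π.fields = some t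

/-- Auxiliary type interpretation [[v : t]]. -/
inductive AuxInterp (ρ : Env) (h : Heap) (A : Set Loc) (Γ : Var → BaseType) (Δ : Graph) :
    Val → BaseType → Prop
  | null (t) : AuxInterp ρ h A Γ Δ Val.null t
  | top (v) : AuxInterp ρ h A Γ Δ v BaseType.top
  | topOut (l : Loc) :
      (∀ l' : Loc, Reach h (Val.loc l) (Val.loc l') → l' ∉ A) →
      AuxInterp ρ h A Γ Δ (Val.loc l) BaseType.topOut
  | node (l : Loc) (n : Node) :
      l ∈ A → (Δ n).isSome →
      (∀ π, EvalPath ρ h π (Val.loc l) → AEval Γ Δ π (BaseType.node n)) →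
      AuxInterp ρ h A Γ Δ (Val.loc l) (BaseType.node n)

/-- Main type interpretation ρ,h,A ⊨ (Γ,Δ,Θ). -/
structure Interp (ρ : Env) (h : Heap) (A : Set Loc) (T : Ty) : Prop where
  paths : ∀ (π : Path) (t : BaseType) (v : Val),
    AEval T.Γ T.Δ π t → EvalPath ρ h π v → AuxInterp ρ h A T.Γ T.Δ v t
  strong : ∀ n ∈ T.Θ, ∀ (π π' : Path) (l l' : Loc),
    AEval T.Γ T.Δ π (BaseType.node n) → AEval T.Γ T.Δ π' (BaseType.node n) →
    EvalPath ρ h π (Val.loc l) → EvalPath ρ h π' (Val.loc l') → l = l'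

/-- Value sub-typing t ≤_σ t' (σ : Node → Option Node, none standing for ⊤). -/
inductive VSub (σ : Node → Option Node) : BaseType → BaseType → Prop
  | bot (t) : VSub σ BaseType.bot t
  | top {t : BaseType} : (∀ n, t ≠ BaseType.node n) → VSub σ t BaseType.top
  | topOut : VSub σ BaseType.topOut BaseType.topOut
  | node {n n' : Node} : σ n = some n' → VSub σ (BaseType.node n) (BaseType.node n')
  | nodeTop {n : Node} : σ n = none → VSub σ (BaseType.node n) BaseType.top

/-- T₁ ⊑ T₂ via the fusion map σ. -/
structure SubtypeVia (T₁ T₂ : Ty) (σ : Node → Option Node) : Prop where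
  st1 : ∀ n n', (T₁.Δ n).isSome → σ n = some n' → (T₂.Δ n').isSome
  st2 : ∀ (t₁ : BaseType) (π : Path), AEval T₁.Γ T₁.Δ π t₁ →
      ∃ t₂, VSub σ t₁ t₂ ∧ AEval T₂.Γ T₂.Δ π t₂
  st3 : ∀ n₂ ∈ T₂.Θ, ∃ n₁ ∈ T₁.Θ,
      ∀ n, ((T₁.Δ n).isSome ∧ σ n = some n₂) ↔ n = n₁

/-- The sub-typing relation T₁ ⊑ T₂. -/
def TySub (T₁ T₂ : Ty) : Prop := ∃ σ, SubtypeVia T₁ T₂ σ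

-- Successor base type of a policy node for field f: the node of the policy
-- governing f if f is deep, and ⊤ otherwise.
open Classical in
noncomputable def polEdge (τ : Pol) (f : Field) : BaseType :=
  if h : ∃ X, (X, f) ∈ τ then BaseType.node (h.choose + 1) else BaseType.top

/-- The graph part of Φ(τ): node 0 is the unfolded root n_τ, node X+1 is the
node n'_X of policy identifier X. -/
noncomputable def PhiGraph (Pm : PolId → Pol) (τ : Pol) : Graph :=
  fun n =>
    match n with
    | 0 => some (polEdge τ)
    | m + 1 => some (polEdge (Pm m))

/-- The root node n_τ of Φ(τ). -/
def PhiRoot : Node := 0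

/-- Heap update h[(l,f) ↦ v]. -/
def hupd (h : Heap) (l : Loc) (f : Field) (v : Val) : Heap :=
  fun l' => if l' = l then (h l).map (fun o => Function.update o f v) else h l'

/-- Graph update Δ[(n,f) ↦ t]. -/
def gupd (Δ : Graph) (n : Node) (f : Field) (t : BaseType) : Graph :=
  fun m => if m = n then (Δ n).map (fun e => Function.update e f t) else Δ m


theorem reach_trans {h : Heap} {a b c : Val} (h1 : Reach h a b) (h2 : Reach h b c) :
    Reach h a c := by
  induction h2 with
  | refl => exact h1
  | step f hr ho ih => exact Reach.step f ih ho

theorem evalFields_nil (h : Heap) (w : Val) : evalFields h w [] = some w := by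
  cases w <;> rfl

theorem aevalFields_nil (Δ : Graph) (s : BaseType) : aevalFields Δ s [] = some s := by
  cases s <;> rfl

theorem eval_avoid {h : Heap} {A : Set Loc} {lx : Loc} {f : Field} {ly : Val}
    (hxA : lx ∈ A) :
    ∀ (fs : List Field) (w : Val), (∀ l', Reach h w (Val.loc l') → l' ∉ A) →
      evalFields (hupd h lx f ly) w fs = evalFields h w fs := by
  intro fs
  induction fs with
  | nil => intro w _; cases w <;> rfl
  | cons f' fs ih =>
    intro w hw
    cases w with
    | null => rfl
    | loc l =>
      have hl : l ≠ lx := fun e => hw l (Reach.refl _) (e ▸ hxA)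
      have hupd_l : hupd h lx f ly l = h l := by simp [hupd, hl]
      cases ho : h l with
      | none => simp [evalFields, hupd_l, ho]
      | some o =>
        simp only [evalFields, hupd_l, ho]
        exact ih (o f') (fun l' hr => hw l' (reach_trans (Reach.step f' (Reach.refl _) ho) hr))

theorem evalFields_append (h : Heap) (as bs : List Field) :
    ∀ w, evalFields h w (as ++ bs) = (evalFields h w as).bind (fun u => evalFields h u bs) := by
  induction as with
  | nil => intro w; simp [evalFields_nil]
  | cons a as ih =>
    intro w
    cases w with
    | null => simp [evalFields]
    | loc l =>
      cases ho : h l with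
      | none => simp [evalFields, ho]
      | some o => simp [evalFields, ho, ih]

theorem aevalFields_append (Δ : Graph) (as bs : List Field) :
    ∀ s, aevalFields Δ s (as ++ bs) = (aevalFields Δ s as).bind (fun u => aevalFields Δ u bs) := by
  induction as with
  | nil => intro s; simp [aevalFields_nil]
  | cons a as ih =>
    intro s
    cases s with
    | node n =>
      cases ho : Δ n with
      | none => simp [aevalFields, ho]
      | some e => simp [aevalFields, ho, ih]
    | bot => simp [aevalFields]
    | top => cases bs <;> simp [aevalFields]
    | topOut => cases bs <;> simp [aevalFields]

theorem pathing_key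
    (ρ : Env) (h : Heap) (A : Set Loc) (Γ : Var → BaseType) (Δ : Graph) (Θ : Set Node)
    (x y : Var) (lx : Loc) (ly : Val) (nx : Node) (ty : BaseType) (f : Field)
    (hint : Interp ρ h A ⟨Γ, Δ, Θ⟩)
    (hx : ρ x = Val.loc lx) (hxA : lx ∈ A)
    (hΓx : Γ x = BaseType.node nx) (hstrong : nx ∈ Θ)
    (hy : ρ y = ly) (hΓy : Γ y = ty)
    (v : Val) (t : BaseType) :
    ∀ (fs : List Field) (w : Val) (s : BaseType) (π₀ : Path),
      EvalPath ρ h π₀ w → AEval Γ Δ π₀ s →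
      evalFields (hupd h lx f ly) w fs = some v →
      aevalFields (gupd Δ nx f ty) s fs = some t →
      (evalFields h w fs = some v ∧ aevalFields Δ s fs = some t) ∨
      (∃ fs' : List Field, EvalPath ρ h ⟨y, fs'⟩ v ∧ AEval Γ Δ ⟨y, fs'⟩ t) ∨
      t = BaseType.top ∨ v = Val.null := by
  intro fs
  induction fs with
  | nil =>
    intro w s π₀ _ _ hconc habs
    rw [evalFields_nil] at hconc
    rw [aevalFields_nil] at habs
    exact Or.inl ⟨by rw [evalFields_nil]; exact hconc, by rw [aevalFields_nil]; exact habs⟩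
  | cons f' fs ih =>
    intro w s π₀ hev₀ habs₀ hconc habs
    cases w with
    | null => simp [evalFields] at hconc
    | loc l =>
      have haux := hint.paths π₀ s (Val.loc l) habs₀ hev₀
      cases haux with
      | top =>
        right; right; left
        simp [aevalFields] at habs
        exact habs.symm
      | topOut _ hreach =>
        left
        constructor
        · rw [← eval_avoid hxA (f' :: fs) (Val.loc l) hreach]; exact hconc
        · simp only [aevalFields] at habs ⊢
          exact habs
      | node _ n hlA hΔn hall =>
        have he0 : Δ n = (⟨Γ, Δ, Θ⟩ : Ty).Δ n := rfl
        obtain ⟨e, he⟩ := Option.isSome_iff_exists.mp hΔn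
        have he' : Δ n = some e := he0.trans he
        have hev₀' : evalFields h (ρ π₀.root) π₀.fields = some (Val.loc l) := hev₀
        have habs₀' : aevalFields Δ (Γ π₀.root) π₀.fields = some (BaseType.node n) := habs₀
        by_cases hn : n = nx
        · -- the node is nx: we are at lx
          rw [hn] at habs₀ he' habs
          have hlx : l = lx := by
            refine hint.strong nx hstrong π₀ ⟨x, []⟩ l lx habs₀ ?_ hev₀ ?_
            · show aevalFields Δ (Γ x) [] = some (BaseType.node nx)
              rw [aevalFields_nil, hΓx]
            · show evalFields h (ρ x) [] = some (Val.loc lx)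
              rw [evalFields_nil, hx]
          rw [hlx] at hconc hev₀'
          rw [hn] at habs₀'
          rw [hlx, hn]
          cases ho : h lx with
          | none => simp [evalFields, hupd, ho] at hconc
          | some o =>
            have hconc' : evalFields (hupd h lx f ly) (Function.update o f ly f') fs
                = some v := by
              simpa [evalFields, hupd, ho] using hconc
            have habs' : aevalFields (gupd Δ nx f ty) (Function.update e f ty f') fs
                = some t := by
              simpa [aevalFields, gupd, he'] using habs
            by_cases hf : f' = f
            · -- we follow the new edge: switch to y
              subst hf
              rw [Function.update_self] at hconc' habs'
              have hres := ih ly ty ⟨y, []⟩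
                (by show evalFields h (ρ y) [] = some ly; rw [evalFields_nil, hy])
                (by show aevalFields Δ (Γ y) [] = some ty; rw [aevalFields_nil, hΓy])
                hconc' habs'
              rcases hres with ⟨h1, h2⟩ | hh | hh | hh
              · right; left
                refine ⟨fs, ?_, ?_⟩
                · show evalFields h (ρ y) fs = some v; rw [hy]; exact h1
                · show aevalFields Δ (Γ y) fs = some t; rw [hΓy]; exact h2
              · exact Or.inr (Or.inl hh)
              · exact Or.inr (Or.inr (Or.inl hh))
              · exact Or.inr (Or.inr (Or.inr hh))
            · -- follow an old edge of lx
              rw [Function.update_of_ne hf] at hconc' habs'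
              have hev₁ : EvalPath ρ h ⟨π₀.root, π₀.fields ++ [f']⟩ (o f') := by
                show evalFields h (ρ π₀.root) (π₀.fields ++ [f']) = some (o f')
                rw [evalFields_append, hev₀']
                simp [evalFields, ho, evalFields_nil]
              have habs₁ : AEval Γ Δ ⟨π₀.root, π₀.fields ++ [f']⟩ (e f') := by
                show aevalFields Δ (Γ π₀.root) (π₀.fields ++ [f']) = some (e f')
                rw [aevalFields_append, habs₀']
                simp [aevalFields, he', aevalFields_nil]
              have hres := ih (o f') (e f') ⟨π₀.root, π₀.fields ++ [f']⟩ hev₁ habs₁ hconc' habs'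
              rcases hres with ⟨h1, h2⟩ | hh | hh | hh
              · left
                exact ⟨by simpa [evalFields, ho] using h1,
                  by simpa [aevalFields, he'] using h2⟩
              · exact Or.inr (Or.inl hh)
              · exact Or.inr (Or.inr (Or.inl hh))
              · exact Or.inr (Or.inr (Or.inr hh))
        · -- node n ≠ nx: untouched by the update
          have hl : l ≠ lx := by
            intro hlx
            subst hlx
            have h1 := hall ⟨x, []⟩
              (by show evalFields h (ρ x) [] = some (Val.loc l); rw [evalFields_nil, hx])
            have h2 : Γ x = BaseType.node n := by
              have h3 : aevalFields Δ (Γ x) [] = some (BaseType.node n) := h1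
              rw [aevalFields_nil] at h3
              exact Option.some.inj h3
            rw [hΓx] at h2
            exact hn (BaseType.node.inj h2).symm
          cases ho : h l with
          | none => simp [evalFields, hupd, hl, ho] at hconc
          | some o =>
            have hconc' : evalFields (hupd h lx f ly) (o f') fs = some v := by
              simpa [evalFields, hupd, hl, ho] using hconc
            have habs' : aevalFields (gupd Δ nx f ty) (e f') fs = some t := by
              simpa [aevalFields, gupd, hn, he'] using habs
            have hev₁ : EvalPath ρ h ⟨π₀.root, π₀.fields ++ [f']⟩ (o f') := by
              show evalFields h (ρ π₀.root) (π₀.fields ++ [f']) = some (o f')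
              rw [evalFields_append, hev₀']
              simp [evalFields, ho, evalFields_nil]
            have habs₁ : AEval Γ Δ ⟨π₀.root, π₀.fields ++ [f']⟩ (e f') := by
              show aevalFields Δ (Γ π₀.root) (π₀.fields ++ [f']) = some (e f')
              rw [aevalFields_append, habs₀']
              simp [aevalFields, he', aevalFields_nil]
            have hres := ih (o f') (e f') ⟨π₀.root, π₀.fields ++ [f']⟩ hev₁ habs₁ hconc' habs'
            rcases hres with ⟨h1, h2⟩ | hh | hh | hh
            · left
              exact ⟨by simpa [evalFields, ho] using h1,
                by simpa [aevalFields, he'] using h2⟩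
            · exact Or.inr (Or.inl hh)
            · exact Or.inr (Or.inr (Or.inl hh))
            · exact Or.inr (Or.inr (Or.inr hh))

/-- Pathing through strong field assignment. -/
theorem pathing_strong_field_assignment
    (ρ : Env) (h : Heap) (A : Set Loc) (Γ : Var → BaseType) (Δ : Graph) (Θ : Set Node)
    (x y : Var) (lx : Loc) (ly : Val) (nx : Node) (ty : BaseType) (f : Field)
    (hint : Interp ρ h A ⟨Γ, Δ, Θ⟩)
    (hx : ρ x = Val.loc lx) (hxA : lx ∈ A)
    (hΓx : Γ x = BaseType.node nx) (hstrong : nx ∈ Θ)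
    (hy : ρ y = ly) (hΓy : Γ y = ty)
    (π : Path) (v : Val) (t : BaseType)
    (hconc : EvalPath ρ (hupd h lx f ly) π v)
    (habs : AEval Γ (gupd Δ nx f ty) π t) :
    (EvalPath ρ h π v ∧ AEval Γ Δ π t) ∨
    (∃ fs : List Field, EvalPath ρ h ⟨y, fs⟩ v ∧ AEval Γ Δ ⟨y, fs⟩ t) ∨
    t = BaseType.top ∨ v = Val.null := by
  have hres := pathing_key ρ h A Γ Δ Θ x y lx ly nx ty f hint hx hxA hΓx hstrong hy hΓy v t
    π.fields (ρ π.root) (Γ π.root) ⟨π.root, []⟩ (evalFields_nil h (ρ π.root))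
    (aevalFields_nil Δ (Γ π.root)) hconc habs
  exact hres

end SecureClones
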